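/- Let d ≥ 2 and let D ⊆ ℝ^d consist (with arbitrary multiplicity) of the standard basis vectors e₁,…,e_d. Let x* = (2,1,…,1)/√(d+3). Then (a) the unique nearest neighbor of x* in D under Euclidean distance is e₁, so the set of n nearest neighbors is {e₁,…,e₁} (n copies); and (b) for any n and λ' > 0, the regularized posterior variance after observing n copies of e₁ satisfies σ²_n(x*) ≥ ‖x* − (x*ᵀe₁)e₁‖₂² = (d−1)/(d+3) > 0. -/

import Mathlib

open Matrix

lemma sum_ite_const' {d : ℕ} (z0 : Fin d) (a b : ℝ) :
    ∑ i : Fin d, (if i = z0 then a else b) = a + ((d : ℝ) - 1) * b := by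
  have h : ∀ i : Fin d, (if i = z0 then a else b) = (if i = z0 then a - b else 0) + b := by
    intro i; split <;> ring
  simp only [h]
  rw [Finset.sum_add_distrib, Finset.sum_ite_eq' Finset.univ z0 (fun _ => a - b)]
  simp only [Finset.mem_univ, if_true, Finset.sum_const, Finset.card_univ, Fintype.card_fin,
    nsmul_eq_mul]
  ring

noncomputable def postK {α E : Type*} [NormedAddCommGroup E] [InnerProductSpace ℝ E]
    {n : ℕ} (φ : α → E) (lam : ℝ) (xs : Fin n → α) (a b : α) : ℝ :=
  (inner ℝ (φ a) (φ b) : ℝ) -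
    (fun i => (inner ℝ (φ (xs i)) (φ a) : ℝ)) ⬝ᵥ
      ((Matrix.of (fun i j => (inner ℝ (φ (xs i)) (φ (xs j)) : ℝ))
          + lam • (1 : Matrix (Fin n) (Fin n) ℝ))⁻¹).mulVec
        (fun i => (inner ℝ (φ (xs i)) (φ b) : ℝ))

theorem nearest_neighbor_insufficiency {d : ℕ} (hd : 2 ≤ d) (n : ℕ) (lam : ℝ) (hlam : 0 < lam)
    (z0 : Fin d) (hz0 : z0 = ⟨0, by omega⟩)
    (xstar : EuclideanSpace ℝ (Fin d))
    (hxstar : ∀ i, xstar i = (if i = z0 then 2 else 1) / Real.sqrt (d + 3)) :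
    (∀ i : Fin d, i ≠ z0 →
        ‖xstar - EuclideanSpace.single z0 (1 : ℝ)‖ < ‖xstar - EuclideanSpace.single i (1 : ℝ)‖)
    ∧ ((d : ℝ) - 1) / ((d : ℝ) + 3)
        ≤ postK (id : EuclideanSpace ℝ (Fin d) → EuclideanSpace ℝ (Fin d)) lam
            (fun _ : Fin n => EuclideanSpace.single z0 (1 : ℝ)) xstar xstar
    ∧ ‖xstar - (inner ℝ xstar (EuclideanSpace.single z0 (1 : ℝ)) : ℝ)
          • EuclideanSpace.single z0 (1 : ℝ)‖ ^ 2 = ((d : ℝ) - 1) / ((d : ℝ) + 3)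
    ∧ 0 < ((d : ℝ) - 1) / ((d : ℝ) + 3) := by
  have hd3 : (0:ℝ) < (d : ℝ) + 3 := by positivity
  set s : ℝ := Real.sqrt (d + 3) with hs_def
  have hs : (0:ℝ) < s := Real.sqrt_pos.mpr (by positivity)
  have hs2 : s ^ 2 = (d : ℝ) + 3 := by
    rw [hs_def, Real.sq_sqrt] <;> positivity
  -- ‖xstar‖² = 1
  have hinner_self : (inner ℝ xstar xstar : ℝ) = 1 := by
    rw [PiLp.inner_apply]
    simp only [RCLike.inner_apply, starRingEnd_apply, star_trivial, hxstar]
    have : ∀ i : Fin d, (if i = z0 then (2:ℝ) else 1) / s * ((if i = z0 then (2:ℝ) else 1) / s)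
        = (if i = z0 then (4:ℝ) else 1) / s ^ 2 := by
      intro i; split <;> ring
    rw [Finset.sum_congr rfl (fun i _ => this i)]
    rw [← Finset.sum_div, sum_ite_const' z0 4 1, hs2]
    field_simp
    ring
  have hxz0 : xstar z0 = 2 / s := by rw [hxstar]; simp
  -- inner xstar e = 2/s
  have hinner_e : (inner ℝ xstar (EuclideanSpace.single z0 (1:ℝ)) : ℝ) = 2 / s := by
    rw [EuclideanSpace.inner_single_right]; simp [hxz0]
  refine ⟨?_, ?_, ?_, ?_⟩
  · -- part (a)
    intro i hi
    have hnorm_e : ∀ j : Fin d, ‖EuclideanSpace.single j (1:ℝ)‖ = 1 := by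
      intro j; rw [EuclideanSpace.norm_single]; norm_num
    have hsq : ∀ j : Fin d, ‖xstar - EuclideanSpace.single j (1:ℝ)‖ ^ 2 = 2 - 2 * xstar j := by
      intro j
      rw [norm_sub_sq_real, EuclideanSpace.inner_single_right, hnorm_e j,
        ← real_inner_self_eq_norm_sq, hinner_self]
      simp; ring
    have h1 : ‖xstar - EuclideanSpace.single z0 (1:ℝ)‖ ^ 2
        < ‖xstar - EuclideanSpace.single i (1:ℝ)‖ ^ 2 := by
      rw [hsq, hsq, hxz0, hxstar i, if_neg hi]
      have : (1:ℝ)/s < 2/s := by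
        rw [div_lt_div_iff₀ hs hs]; nlinarith
      linarith [this]
    exact lt_of_pow_lt_pow_left₀ 2 (norm_nonneg _) h1
  · -- part (b)
    have hee : (inner ℝ (EuclideanSpace.single z0 (1:ℝ)) (EuclideanSpace.single z0 (1:ℝ)) : ℝ) = 1 := by
      rw [EuclideanSpace.inner_single_left]; simp
    have hex : (inner ℝ (EuclideanSpace.single z0 (1:ℝ)) xstar : ℝ) = 2 / s := by
      rw [EuclideanSpace.inner_single_left]; simp [hxz0]
    rw [postK]
    simp only [id_eq, hinner_self, hee, hex]
    set M : Matrix (Fin n) (Fin n) ℝ :=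
      Matrix.of (fun _ _ : Fin n => (1:ℝ)) + lam • (1 : Matrix (Fin n) (Fin n) ℝ) with hM_def
    set w : Fin n → ℝ := fun _ => (2 / s) / ((n : ℝ) + lam) with hw_def
    set v : Fin n → ℝ := fun _ : Fin n => (2:ℝ) / s with hv_def
    have hnlam : (0:ℝ) < (n : ℝ) + lam := by positivity
    have hMw : M *ᵥ w = v := by
      funext j
      simp only [hM_def, Matrix.mulVec, dotProduct, Matrix.add_apply, Matrix.of_apply,
        Matrix.smul_apply, Matrix.one_apply, smul_eq_mul, hw_def, hv_def]
      rw [Finset.sum_congr rfl (fun i _ => by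
        show (1 + lam * if j = i then (1:ℝ) else 0) * (2 / s / ((n:ℝ) + lam))
          = (2 / s / ((n:ℝ) + lam)) + (if i = j then lam * (2 / s / ((n:ℝ) + lam)) else 0)
        rcases eq_or_ne i j with h | h
        · subst h; rw [if_pos rfl, if_pos rfl]; ring
        · rw [if_neg (Ne.symm h), if_neg h]; ring)]
      rw [Finset.sum_add_distrib, Finset.sum_ite_eq' Finset.univ j, Finset.sum_const]
      simp only [Finset.mem_univ, if_true, Finset.card_univ, Fintype.card_fin, nsmul_eq_mul]
      field_simp
    have hposdef : M.PosDef := by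
      rw [Matrix.posDef_iff_dotProduct_mulVec]
      constructor
      · unfold Matrix.IsHermitian
        ext i j
        simp [hM_def, Matrix.one_apply, eq_comm]
      · intro x hx
        have hx2 : (0:ℝ) < ∑ i, x i * x i := by
          have hne : ∃ i, x i ≠ 0 := by
            by_contra h; push_neg at h; exact hx (funext h)
          obtain ⟨i0, hi0⟩ := hne
          apply Finset.sum_pos' (fun i _ => mul_self_nonneg _)
          exact ⟨i0, Finset.mem_univ _, mul_self_pos.mpr hi0⟩
        have this1 : star x ⬝ᵥ M *ᵥ x = (∑ i, x i) ^ 2 + lam * ∑ i, x i * x i := by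
          simp only [hM_def, dotProduct, Matrix.mulVec, Matrix.add_apply, Matrix.of_apply,
            Matrix.smul_apply, Matrix.one_apply, smul_eq_mul, Pi.star_apply, star_trivial]
          have key : ∀ j : Fin n, ∑ i, (1 + lam * if j = i then (1:ℝ) else 0) * x i
              = (∑ i, x i) + lam * x j := by
            intro j
            rw [Finset.sum_congr rfl (fun i _ => by
              show (1 + lam * if j = i then (1:ℝ) else 0) * x i
                = x i + (if i = j then lam * x i else 0 : ℝ)
              rcases eq_or_ne i j with h | h
              · subst h; rw [if_pos rfl, if_pos rfl]; ring
              · rw [if_neg (Ne.symm h), if_neg h]; ring)]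
            rw [Finset.sum_add_distrib, Finset.sum_ite_eq' Finset.univ j]
            simp only [Finset.mem_univ, if_true]
          rw [Finset.sum_congr rfl (fun j _ => by rw [key j])]
          simp only [mul_add]
          rw [Finset.sum_add_distrib, ← Finset.sum_mul, sq]
          congr 1
          rw [Finset.mul_sum]
          exact Finset.sum_congr rfl fun j _ => by ring
        rw [this1]
        nlinarith [sq_nonneg (∑ i, x i)]
    have hunit : IsUnit M.det := isUnit_iff_ne_zero.mpr (ne_of_gt hposdef.det_pos)
    have hinv : M⁻¹ *ᵥ v = w := by
      rw [← hMw, Matrix.mulVec_mulVec, Matrix.nonsing_inv_mul M hunit, Matrix.one_mulVec]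
    rw [hinv]
    have hdot : v ⬝ᵥ w = (n : ℝ) * ((4 / (s^2)) / ((n : ℝ) + lam)) := by
      simp only [dotProduct, hv_def, hw_def, Finset.sum_const, Finset.card_univ,
        Fintype.card_fin, nsmul_eq_mul]
      have hs0 : s ≠ 0 := ne_of_gt hs
      have h0 : (n:ℝ) + lam ≠ 0 := ne_of_gt hnlam
      field_simp
      ring
    rw [hdot, hs2]
    have h4 : (4 : ℝ) / ((d:ℝ) + 3) ≥ 0 := by positivity
    have hfrac : (n : ℝ) * ((4 / ((d:ℝ)+3)) / ((n : ℝ) + lam)) ≤ 4 / ((d:ℝ)+3) := by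
      rw [mul_div_assoc', div_le_iff₀ hnlam]
      have : (0:ℝ) ≤ 4 / ((d:ℝ)+3) * lam := by positivity
      nlinarith
    have : ((d : ℝ) - 1) / ((d : ℝ) + 3) = 1 - 4 / ((d:ℝ)+3) := by
      field_simp
      ring
    rw [this]
    linarith
  · -- part (c)
    rw [hinner_e, ← real_inner_self_eq_norm_sq, PiLp.inner_apply]
    simp only [RCLike.inner_apply, starRingEnd_apply, star_trivial]
    have hcomp : ∀ i : Fin d,
        (xstar - (2/s) • EuclideanSpace.single z0 (1:ℝ)) i = if i = z0 then 0 else 1 / s := by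
      intro i
      rw [PiLp.sub_apply, PiLp.smul_apply, EuclideanSpace.single_apply, hxstar i]
      by_cases h : i = z0
      · simp only [h, if_pos rfl, eq_self_iff_true, if_true, smul_eq_mul, mul_one]
        ring
      · rw [if_neg h, if_neg h, if_neg h]
        simp
    rw [Finset.sum_congr rfl (fun i _ => by rw [hcomp i])]
    have : ∀ i : Fin d, (if i = z0 then (0:ℝ) else 1/s) * (if i = z0 then 0 else 1/s)
        = if i = z0 then 0 else 1 / s^2 := by
      intro i; split <;> ring
    rw [Finset.sum_congr rfl (fun i _ => this i), sum_ite_const' z0 0 (1 / s^2), hs2]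
    field_simp
    ring
  · -- part (d)
    apply div_pos
    · have : (2:ℝ) ≤ (d:ℝ) := by exact_mod_cast hd
      linarith
    · exact hd3
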